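/- Theorem 2 (FDR control of multi-step QuTE, positively dependent p-values): for every graph G, every integer c ≥ 0 and every level α ∈ (0,1), if the vector of N p-values is PRDS on each null and every null p-value is superuniform, then the c-step QuTE procedure at level α satisfies FDR ≤ α·|H^0|/N. -/

import Mathlib

open MeasureTheory ProbabilityTheory Finset

open Classical in
/-- The Benjamini–Hochberg count `k̂_α(P)`: the largest `k ∈ {0,…,N}` such that
at least `k` of the p-values are `≤ α k / N`, where `N` is the number of hypotheses. -/
noncomputable def bhCount {I : Type*} [Fintype I] (α : ℝ) (P : I → ℝ) : ℕ :=
  Nat.findGreatest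
    (fun k => k ≤ (Finset.univ.filter fun i => P i ≤ α * k / (Fintype.card I)).card)
    (Fintype.card I)

open Classical in
/-- The Benjamini–Hochberg rejection set `Rej_α(P) = {i : P i ≤ α k̂_α(P) / N}`. -/
noncomputable def bhRej {I : Type*} [Fintype I] (α : ℝ) (P : I → ℝ) : Finset I :=
  Finset.univ.filter fun i => P i ≤ α * (bhCount α P) / (Fintype.card I)

open Classical in
/-- The p-value vector `P^{b,c}` known to node `b` after `c` rounds of communication:
every p-value hosted at a node of graph distance more than `c` from `b` is replaced by `1`. -/
noncomputable def quteMasked {V : Type*} (G : SimpleGraph V) (n : V → ℕ)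
    (c : ℕ) (P : (Σ a : V, Fin (n a)) → ℝ) (b : V) : (Σ a : V, Fin (n a)) → ℝ :=
  fun i => if G.edist b i.1 ≤ c then P i else 1

open Classical in
/-- The rejection set of the `c`-step QuTE procedure at level `α`: hypothesis `j` at node `a`
is rejected iff some node `b` within graph distance `c` of `a` rejects it in its local BH test
at level `α` on the p-values it knows (unknown p-values set to `1`). -/
noncomputable def quteRej {V : Type*} [Fintype V] (G : SimpleGraph V) (n : V → ℕ)
    (c : ℕ) (α : ℝ) (P : (Σ a : V, Fin (n a)) → ℝ) : Finset (Σ a : V, Fin (n a)) :=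
  Finset.univ.filter fun i => ∃ b : V, G.edist i.1 b ≤ c ∧
    P i ≤ α * (bhCount α (quteMasked G n c P b)) / (Fintype.card (Σ a : V, Fin (n a)))

open ENNReal

section
open Classical

lemma bhCount_le_card {I : Type*} [Fintype I] (α : ℝ) (P : I → ℝ) :
    bhCount α P ≤ Fintype.card I := Nat.findGreatest_le _

lemma bhCount_spec {I : Type*} [Fintype I] (α : ℝ) (P : I → ℝ) :
    bhCount α P ≤ (Finset.univ.filter fun i =>
      P i ≤ α * (bhCount α P) / (Fintype.card I)).card :=
  Nat.findGreatest_spec (P := fun k =>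
      k ≤ (Finset.univ.filter fun i => P i ≤ α * k / (Fintype.card I)).card)
      (Nat.zero_le (Fintype.card I)) (by simp)

lemma bhCount_antitone {I : Type*} [Fintype I] {α : ℝ} {P Q : I → ℝ}
    (h : P ≤ Q) : bhCount α Q ≤ bhCount α P := by
  refine Nat.le_findGreatest (bhCount_le_card α Q) ?_
  refine le_trans (bhCount_spec α Q) (Finset.card_le_card ?_)
  intro i hi
  simp only [Finset.mem_filter, Finset.mem_univ, true_and] at hi ⊢
  exact le_trans (h i) hi

lemma quteMasked_mono {V : Type*} (G : SimpleGraph V) (n : V → ℕ) (c : ℕ)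
    {P Q : (Σ a : V, Fin (n a)) → ℝ} (h : P ≤ Q) (b : V) :
    quteMasked G n c P b ≤ quteMasked G n c Q b := by
  intro i
  unfold quteMasked
  split <;> simp [h i]

lemma quteRej_antitone {V : Type*} [Fintype V] (G : SimpleGraph V) (n : V → ℕ)
    (c : ℕ) {α : ℝ} (hα : 0 ≤ α) {P Q : (Σ a : V, Fin (n a)) → ℝ} (h : P ≤ Q) :
    quteRej G n c α Q ⊆ quteRej G n c α P := by
  intro i hi
  simp only [quteRej, Finset.mem_filter, Finset.mem_univ, true_and] at hi ⊢
  obtain ⟨b, hb, hle⟩ := hi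
  refine ⟨b, hb, le_trans (h i) (le_trans hle ?_)⟩
  have hk : bhCount α (quteMasked G n c Q b) ≤ bhCount α (quteMasked G n c P b) :=
    bhCount_antitone (quteMasked_mono G n c h b)
  gcongr

lemma bhCount_le_quteRej_card {V : Type*} [Fintype V] (G : SimpleGraph V) (n : V → ℕ)
    (c : ℕ) {α : ℝ} (hα : 0 < α) (hα1 : α < 1) (P : (Σ a : V, Fin (n a)) → ℝ)
    (hN : (0:ℕ) < Fintype.card (Σ a : V, Fin (n a))) (b : V) :
    bhCount α (quteMasked G n c P b) ≤ (quteRej G n c α P).card := by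
  classical
  have hNR : (0:ℝ) < ((Fintype.card (Σ a : V, Fin (n a))) : ℝ) := by exact_mod_cast hN
  refine le_trans (bhCount_spec α (quteMasked G n c P b)) (Finset.card_le_card ?_)
  intro j hj
  simp only [Finset.mem_filter, Finset.mem_univ, true_and] at hj
  have hthr : α * (bhCount α (quteMasked G n c P b)) /
      (Fintype.card (Σ a : V, Fin (n a))) < 1 := by
    have hkN : ((bhCount α (quteMasked G n c P b)):ℝ)
        ≤ ((Fintype.card (Σ a : V, Fin (n a))) : ℝ) := by
      exact_mod_cast bhCount_le_card α (quteMasked G n c P b)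
    calc α * (bhCount α (quteMasked G n c P b)) / (Fintype.card (Σ a : V, Fin (n a)))
        ≤ α * (Fintype.card (Σ a : V, Fin (n a))) / (Fintype.card (Σ a : V, Fin (n a))) := by
          gcongr
      _ = α := by rw [mul_div_assoc, div_self hNR.ne', mul_one]
      _ < 1 := hα1
  have hdist : G.edist b j.1 ≤ c := by
    by_contra hcon
    have : quteMasked G n c P b j = 1 := by simp [quteMasked, hcon]
    rw [this] at hj
    linarith
  have hPj : P j ≤ α * (bhCount α (quteMasked G n c P b)) /
      (Fintype.card (Σ a : V, Fin (n a))) := by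
    have : quteMasked G n c P b j = P j := by simp [quteMasked, hdist]
    rwa [this] at hj
  simp only [quteRej, Finset.mem_filter, Finset.mem_univ, true_and]
  exact ⟨b, by rwa [SimpleGraph.edist_comm], hPj⟩

lemma mem_quteRej_le {V : Type*} [Fintype V] (G : SimpleGraph V) (n : V → ℕ)
    (c : ℕ) {α : ℝ} (hα : 0 < α) (hα1 : α < 1) {P : (Σ a : V, Fin (n a)) → ℝ}
    {i : (Σ a : V, Fin (n a))} (hi : i ∈ quteRej G n c α P) :
    P i ≤ α * (quteRej G n c α P).card / (Fintype.card (Σ a : V, Fin (n a))) ∧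
      1 ≤ (quteRej G n c α P).card := by
  classical
  have hN : (0:ℕ) < Fintype.card (Σ a : V, Fin (n a)) := Fintype.card_pos_iff.mpr ⟨i⟩
  have hNR : (0:ℝ) < ((Fintype.card (Σ a : V, Fin (n a))) : ℝ) := by exact_mod_cast hN
  have hmem := hi
  simp only [quteRej, Finset.mem_filter, Finset.mem_univ, true_and] at hi
  obtain ⟨b, hb, hle⟩ := hi
  constructor
  · refine le_trans hle ?_
    have hkR : ((bhCount α (quteMasked G n c P b)):ℝ) ≤ ((quteRej G n c α P).card : ℝ) := by
      exact_mod_cast bhCount_le_quteRej_card G n c hα hα1 P hN b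
    gcongr
  · exact Finset.card_pos.mpr ⟨i, hmem⟩

end

section
open Classical

lemma measurable_card_le {γ I : Type*} [MeasurableSpace γ] [Fintype I]
    (g : γ → I → ℝ) (hg : ∀ i, Measurable fun x => g x i) (t : ℝ) :
    Measurable fun x => (Finset.univ.filter fun i => g x i ≤ t).card := by
  have : (fun x => (Finset.univ.filter fun i => g x i ≤ t).card)
      = fun x => ∑ i : I, if g x i ≤ t then 1 else 0 := by
    funext x; rw [Finset.card_filter]
  rw [this]
  exact Finset.measurable_sum _ fun i _ =>
    Measurable.ite (measurableSet_le (hg i) measurable_const) measurable_const measurable_const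

lemma measurable_bhCount {γ I : Type*} [MeasurableSpace γ] [Fintype I] (α : ℝ)
    (g : γ → I → ℝ) (hg : ∀ i, Measurable fun x => g x i) :
    Measurable fun x => bhCount α (g x) := by
  unfold bhCount
  refine measurable_findGreatest fun k hk => ?_
  have : {x | k ≤ (Finset.univ.filter fun i => g x i ≤ α * k / (Fintype.card I)).card}
      = (fun x => (Finset.univ.filter fun i =>
          g x i ≤ α * k / (Fintype.card I)).card) ⁻¹' (Set.Ici k) := rfl
  rw [this]
  exact measurable_card_le g hg _ measurableSet_Ici

lemma measurable_quteRejCard {γ V : Type*} [MeasurableSpace γ] [Fintype V] (G : SimpleGraph V)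
    (n : V → ℕ) (c : ℕ) (α : ℝ)
    (g : γ → (Σ a : V, Fin (n a)) → ℝ) (hg : ∀ i, Measurable fun x => g x i) :
    Measurable fun x => (quteRej G n c α (g x)).card := by
  have hmask : ∀ b i, Measurable fun x => quteMasked G n c (g x) b i := by
    intro b i
    unfold quteMasked
    split
    · exact hg i
    · exact measurable_const
  have hbh : ∀ b : V, Measurable fun x => bhCount α (quteMasked G n c (g x) b) :=
    fun b => measurable_bhCount α _ (hmask b)
  have hthr : ∀ b : V, Measurable fun x =>
      α * (bhCount α (quteMasked G n c (g x) b) : ℝ) / (Fintype.card (Σ a : V, Fin (n a))) := by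
    intro b
    apply Measurable.div_const
    apply Measurable.const_mul
    exact (measurable_from_nat (f := fun k : ℕ => (k:ℝ))).comp (hbh b)
  have : (fun x => (quteRej G n c α (g x)).card)
      = fun x => ∑ i : (Σ a : V, Fin (n a)),
          if (∃ b : V, G.edist i.1 b ≤ c ∧ g x i ≤ α * (bhCount α (quteMasked G n c (g x) b)) /
              (Fintype.card (Σ a : V, Fin (n a)))) then 1 else 0 := by
    funext x; rw [quteRej, Finset.card_filter]
  rw [this]
  refine Finset.measurable_sum _ fun i _ => ?_
  refine Measurable.ite ?_ measurable_const measurable_const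
  have : {x : γ | ∃ b : V, G.edist i.1 b ≤ c ∧ g x i ≤
        α * (bhCount α (quteMasked G n c (g x) b)) / (Fintype.card (Σ a : V, Fin (n a)))}
      = ⋃ b : V, ({x : γ | G.edist i.1 b ≤ c} ∩ {x : γ | g x i ≤
          α * (bhCount α (quteMasked G n c (g x) b)) /
            (Fintype.card (Σ a : V, Fin (n a)))}) := by
    ext x
    simp only [Set.mem_setOf_eq, Set.mem_iUnion, Set.mem_inter_iff]
  rw [this]
  refine MeasurableSet.iUnion fun b => ?_
  exact (MeasurableSet.const _).inter (measurableSet_le (hg i) (hthr b))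

end

section
open Classical

lemma qute_core {I : Type*} [Fintype I] {Ω : Type*} [MeasurableSpace Ω]
    (μ : Measure Ω) [IsProbabilityMeasure μ]
    (P : Ω → I → ℝ) (hPmeas : ∀ j, Measurable fun ω => P ω j)
    (hPrange : ∀ ω j, P ω j ∈ Set.Icc (0:ℝ) 1)
    (R : (I → ℝ) → ℕ) (hRmeas : Measurable R)
    (hRanti : ∀ p q : I → ℝ, p ≤ q → R q ≤ R p)
    (i : I)
    (hnull : ∀ u ∈ Set.Icc (0:ℝ) 1, μ {ω | P ω i ≤ u} ≤ ENNReal.ofReal u)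
    (hPRDS : ∀ D : Set (I → ℝ), MeasurableSet D →
      (∀ x ∈ D, ∀ y ∈ Set.Icc (0 : I → ℝ) 1, x ≤ y → y ∈ D) →
      ∀ s t : ℝ, 0 < s → s ≤ t → t ≤ 1 → 0 < μ {ω | P ω i ≤ s} →
        (μ[|{ω | P ω i ≤ s}]) {ω | P ω ∈ D} ≤ (μ[|{ω | P ω i ≤ t}]) {ω | P ω ∈ D})
    {α : ℝ} (hα : 0 < α) (hα1 : α < 1) :
    ∑ k ∈ Finset.Icc 1 (Fintype.card I), ((k : ℝ≥0∞))⁻¹ *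
        μ ({ω | P ω i ≤ α * k / (Fintype.card I)} ∩ {ω | R (P ω) = k})
      ≤ ENNReal.ofReal (α / (Fintype.card I)) := by
  have hN : (0:ℕ) < Fintype.card I := Fintype.card_pos_iff.mpr ⟨i⟩
  have hNR : (0:ℝ) < (Fintype.card I : ℝ) := by exact_mod_cast hN
  have hPm : Measurable P := measurable_pi_iff.mpr hPmeas
  set N := Fintype.card I with hNdef
  -- basic measurable sets
  have hSmeas : ∀ u : ℝ, MeasurableSet {ω | P ω i ≤ u} := fun u =>
    measurableSet_le (hPmeas i) measurable_const
  have hRPmeas : Measurable fun ω => R (P ω) := hRmeas.comp hPm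
  have hTmeas : ∀ k : ℕ, MeasurableSet {ω | R (P ω) = k} := fun k =>
    hRPmeas (measurableSet_singleton k)
  have hLmeas : ∀ m : ℕ, MeasurableSet {ω | R (P ω) ≤ m} := fun m =>
    hRPmeas measurableSet_Iic
  -- the conditional measures
  set q : ℕ → ℝ := fun k => α * k / N with hqdef
  set ν : ℕ → Measure Ω := fun k => μ[|{ω | P ω i ≤ q k}] with hνdef
  have hq_nonneg : ∀ k : ℕ, 0 ≤ q k := fun k => by positivity
  have hq_mono : ∀ j k : ℕ, j ≤ k → q j ≤ q k := by
    intro j k hjk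
    simp only [hqdef]
    have : (j:ℝ) ≤ (k:ℝ) := by exact_mod_cast hjk
    gcongr
  have hq_le_one : ∀ k ≤ N, q k ≤ 1 := by
    intro k hk
    have hkN : (k:ℝ) ≤ (N:ℝ) := by exact_mod_cast hk
    have : q k ≤ α * N / N := by
      simp only [hqdef]; gcongr
    rw [mul_div_assoc, div_self hNR.ne', mul_one] at this
    linarith
  have hν_le_one : ∀ k : ℕ, ∀ A : Set Ω, ν k A ≤ 1 := by
    intro k A
    rcases eq_or_ne (μ {ω | P ω i ≤ q k}) 0 with h0 | h0
    · simp only [hνdef]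
      rw [cond_eq_zero_of_meas_eq_zero h0]
      simp
    · have : ν k A ≤ ν k Set.univ := measure_mono (Set.subset_univ A)
      refine le_trans this ?_
      simp only [hνdef]
      rw [cond_apply (hSmeas (q k)), Set.inter_univ,
        ENNReal.inv_mul_cancel h0 (measure_ne_top μ _)]
  -- Step D1
  have hD1 : ∀ k ∈ Finset.Icc 1 N, ((k : ℝ≥0∞))⁻¹ *
      μ ({ω | P ω i ≤ q k} ∩ {ω | R (P ω) = k})
      ≤ ENNReal.ofReal (α / N) * ν k {ω | R (P ω) = k} := by
    intro k hk
    rw [Finset.mem_Icc] at hk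
    have hkpos : (1:ℕ) ≤ k := hk.1
    rcases eq_or_ne (μ {ω | P ω i ≤ q k}) 0 with h0 | h0
    · have : μ ({ω | P ω i ≤ q k} ∩ {ω | R (P ω) = k}) = 0 :=
        le_antisymm (le_trans (measure_mono Set.inter_subset_left) h0.le) zero_le
      rw [this, mul_zero]
      exact zero_le
    · have hνk : μ ({ω | P ω i ≤ q k} ∩ {ω | R (P ω) = k})
          = μ {ω | P ω i ≤ q k} * ν k {ω | R (P ω) = k} := by
        simp only [hνdef]
        rw [cond_apply (hSmeas (q k)), ← mul_assoc,
          ENNReal.mul_inv_cancel h0 (measure_ne_top μ _), one_mul]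
      rw [hνk, ← mul_assoc]
      have hμS : μ {ω | P ω i ≤ q k} ≤ ENNReal.ofReal (q k) :=
        hnull (q k) ⟨hq_nonneg k, hq_le_one k hk.2⟩
      have hkey : ((k : ℝ≥0∞))⁻¹ * ENNReal.ofReal (q k) = ENNReal.ofReal (α / N) := by
        have hq_eq : q k = (α / N) * k := by
          simp only [hqdef]; ring
        rw [hq_eq, ENNReal.ofReal_mul (by positivity), ENNReal.ofReal_natCast,
          ← mul_assoc, mul_comm ((k:ℝ≥0∞))⁻¹, mul_assoc,
          ENNReal.inv_mul_cancel (by exact_mod_cast (by omega : k ≠ 0)) (ENNReal.natCast_ne_top k), mul_one]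
      calc ((k : ℝ≥0∞))⁻¹ * μ {ω | P ω i ≤ q k} * ν k {ω | R (P ω) = k}
          ≤ ((k : ℝ≥0∞))⁻¹ * ENNReal.ofReal (q k) * ν k {ω | R (P ω) = k} := by gcongr
        _ = ENNReal.ofReal (α / N) * ν k {ω | R (P ω) = k} := by rw [hkey]
  -- Step D2 : telescoping
  have hPRDS' : ∀ m : ℕ, 1 ≤ m → m + 1 ≤ N →
      ν m {ω | R (P ω) ≤ m} ≤ ν (m+1) {ω | R (P ω) ≤ m} := by
    intro m hm1 hmN
    rcases eq_or_ne (μ {ω | P ω i ≤ q m}) 0 with h0 | h0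
    · simp only [hνdef]
      rw [cond_eq_zero_of_meas_eq_zero h0]
      simp
    · set D : Set (I → ℝ) := {p | R (fun j => max (p j) 0) ≤ m} with hDdef
      have hDmeas : MeasurableSet D := by
        have hclamp : Measurable fun p : I → ℝ => (fun j => max (p j) 0) :=
          measurable_pi_iff.mpr fun j => (measurable_pi_apply j).max measurable_const
        exact (hRmeas.comp hclamp) measurableSet_Iic
      have hDup : ∀ x ∈ D, ∀ y ∈ Set.Icc (0 : I → ℝ) 1, x ≤ y → y ∈ D := by
        intro x hx y _ hxy
        simp only [hDdef, Set.mem_setOf_eq] at hx ⊢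
        refine le_trans (hRanti _ _ ?_) hx
        intro j
        exact max_le_max (hxy j) le_rfl
      have hPD : {ω | P ω ∈ D} = {ω | R (P ω) ≤ m} := by
        ext ω
        simp only [hDdef, Set.mem_setOf_eq]
        have : (fun j => max (P ω j) 0) = P ω := by
          funext j
          exact max_eq_left (hPrange ω j).1
        rw [this]
      have := hPRDS D hDmeas hDup (q m) (q (m+1))
        (by simp only [hqdef]; positivity)
        (hq_mono m (m+1) (Nat.le_succ m)) (hq_le_one (m+1) hmN)
        (pos_iff_ne_zero.mpr h0)
      rw [hPD] at this
      exact this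
  have htel : ∀ m : ℕ, 1 ≤ m → m ≤ N →
      ∑ k ∈ Finset.Icc 1 m, ν k {ω | R (P ω) = k} ≤ ν m {ω | R (P ω) ≤ m} := by
    intro m
    induction m with
    | zero => intro h; omega
    | succ m ih =>
      intro _ hmN
      rcases Nat.eq_zero_or_pos m with hm0 | hmpos
      · subst hm0
        simp only [Finset.Icc_self, Finset.sum_singleton]
        exact measure_mono (fun ω hω => le_of_eq hω)
      · rw [Finset.sum_Icc_succ_top (by omega : 1 ≤ m + 1)]
        have h1 : ∑ k ∈ Finset.Icc 1 m, ν k {ω | R (P ω) = k}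
            ≤ ν (m+1) {ω | R (P ω) ≤ m} :=
          le_trans (ih hmpos (by omega)) (hPRDS' m hmpos hmN)
        have h2 : ν (m+1) {ω | R (P ω) ≤ m} + ν (m+1) {ω | R (P ω) = m + 1}
            = ν (m+1) {ω | R (P ω) ≤ m + 1} := by
          rw [← measure_union ?_ (hTmeas (m+1))]
          · congr 1
            ext ω
            simp only [Set.mem_union, Set.mem_setOf_eq]
            omega
          · rw [Set.disjoint_left]
            intro ω hω hω'
            simp only [Set.mem_setOf_eq] at hω hω'
            omega
        calc ∑ k ∈ Finset.Icc 1 m, ν k {ω | R (P ω) = k} + ν (m+1) {ω | R (P ω) = m+1}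
            ≤ ν (m+1) {ω | R (P ω) ≤ m} + ν (m+1) {ω | R (P ω) = m+1} := by gcongr
          _ = ν (m+1) {ω | R (P ω) ≤ m + 1} := h2
  -- combine
  calc ∑ k ∈ Finset.Icc 1 N, ((k : ℝ≥0∞))⁻¹ *
        μ ({ω | P ω i ≤ α * k / N} ∩ {ω | R (P ω) = k})
      ≤ ∑ k ∈ Finset.Icc 1 N, ENNReal.ofReal (α / N) * ν k {ω | R (P ω) = k} :=
        Finset.sum_le_sum hD1
    _ = ENNReal.ofReal (α / N) * ∑ k ∈ Finset.Icc 1 N, ν k {ω | R (P ω) = k} := by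
        rw [Finset.mul_sum]
    _ ≤ ENNReal.ofReal (α / N) * 1 := by
        gcongr
        exact le_trans (htel N hN le_rfl) (hν_le_one N _)
    _ = ENNReal.ofReal (α / N) := mul_one _

end


/-- **Theorem 2 (FDR control of multi-step QuTE, positively dependent p-values).**
For every graph `G` and level `α ∈ (0,1)`, if the vector of `N` p-values is PRDS on each null
and every null p-value is superuniform, then the `c`-step QuTE procedure at level `α`
satisfies `FDR ≤ α |H⁰| / N`. -/
theorem qute_multi_step_fdr_control_prds
    {V : Type*} [Fintype V] [DecidableEq V] [Nonempty V] (G : SimpleGraph V)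
    (n : V → ℕ) (hn : ∀ a, 1 ≤ n a)
    {Ω : Type*} [MeasurableSpace Ω] (μ : Measure Ω) [IsProbabilityMeasure μ]
    (P : Ω → (Σ a : V, Fin (n a)) → ℝ)
    (hPmeas : ∀ i, Measurable fun ω => P ω i)
    (hPrange : ∀ ω i, P ω i ∈ Set.Icc (0 : ℝ) 1)
    (H0 : Finset (Σ a : V, Fin (n a)))
    (hnull : ∀ i ∈ H0, ∀ u ∈ Set.Icc (0 : ℝ) 1,
      μ {ω | P ω i ≤ u} ≤ ENNReal.ofReal u)
    -- PRDS on each null: for every measurable nondecreasing set `D ⊆ [0,1]^N` and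
    -- all `0 < s ≤ t ≤ 1` with `Pr(P i ≤ s) > 0`,
    -- `Pr(P ∈ D | P i ≤ s) ≤ Pr(P ∈ D | P i ≤ t)`.
    (hPRDS : ∀ i ∈ H0, ∀ D : Set ((Σ a : V, Fin (n a)) → ℝ), MeasurableSet D →
      (∀ x ∈ D, ∀ y ∈ Set.Icc (0 : (Σ a : V, Fin (n a)) → ℝ) 1, x ≤ y → y ∈ D) →
      ∀ s t : ℝ, 0 < s → s ≤ t → t ≤ 1 → 0 < μ {ω | P ω i ≤ s} →
        (μ[|{ω | P ω i ≤ s}]) {ω | P ω ∈ D} ≤ (μ[|{ω | P ω i ≤ t}]) {ω | P ω ∈ D})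
    (α : ℝ) (hα : α ∈ Set.Ioo (0 : ℝ) 1) (c : ℕ) :
    ∫ ω, (((quteRej G n c α (P ω) ∩ H0).card : ℝ) /
        (max ((quteRej G n c α (P ω)).card) 1 : ℕ)) ∂μ
      ≤ α * H0.card / Fintype.card (Σ a : V, Fin (n a)) := by
  classical
  obtain ⟨hα0, hα1⟩ := hα
  have hNE : Nonempty (Σ a : V, Fin (n a)) := ⟨⟨Classical.arbitrary V, ⟨0, hn _⟩⟩⟩
  have hN : (0:ℕ) < Fintype.card (Σ a : V, Fin (n a)) := Fintype.card_pos_iff.mpr hNE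
  have hNR : (0:ℝ) < ((Fintype.card (Σ a : V, Fin (n a))):ℝ) := by exact_mod_cast hN
  set N := Fintype.card (Σ a : V, Fin (n a)) with hNdef
  set R : ((Σ a : V, Fin (n a)) → ℝ) → ℕ := fun p => (quteRej G n c α p).card with hRdef
  have hRmeas : Measurable R :=
    measurable_quteRejCard G n c α id fun i => measurable_pi_apply i
  have hRanti : ∀ p q : ((Σ a : V, Fin (n a)) → ℝ), p ≤ q → R q ≤ R p := fun p q h =>
    Finset.card_le_card (quteRej_antitone G n c hα0.le h)
  set E : (Σ a : V, Fin (n a)) → ℕ → Set Ω := fun i k =>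
    {ω | P ω i ≤ α * k / N} ∩ {ω | R (P ω) = k} with hEdef
  have hEmeas : ∀ i k, MeasurableSet (E i k) := fun i k =>
    (measurableSet_le (hPmeas i) measurable_const).inter
      ((hRmeas.comp (measurable_pi_iff.mpr hPmeas)) (measurableSet_singleton k))
  set F : Ω → ℝ := fun ω => ∑ i ∈ H0, ∑ k ∈ Finset.Icc 1 N,
    Set.indicator (E i k) (fun _ => (k:ℝ)⁻¹) ω with hFdef
  have hFint : Integrable F μ := by
    refine integrable_finset_sum _ fun i _ => integrable_finset_sum _ fun k _ => ?_
    exact (integrable_const _).indicator (hEmeas i k)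
  -- pointwise bound
  have hpoint : ∀ ω, (((quteRej G n c α (P ω) ∩ H0).card : ℝ) /
      (max ((quteRej G n c α (P ω)).card) 1 : ℕ)) ≤ F ω := by
    intro ω
    have hFnn : ∀ (i : (Σ a : V, Fin (n a))) (k : ℕ),
        0 ≤ Set.indicator (E i k) (fun _ => (k:ℝ)⁻¹) ω :=
      fun i k => Set.indicator_nonneg (fun _ _ => inv_nonneg.mpr (Nat.cast_nonneg _)) ω
    rcases Nat.eq_zero_or_pos ((quteRej G n c α (P ω)).card) with h0 | hpos
    · have hempty : quteRej G n c α (P ω) = ∅ := Finset.card_eq_zero.mp h0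
      rw [hempty]
      simp only [Finset.empty_inter, Finset.card_empty, Nat.cast_zero, zero_div]
      exact Finset.sum_nonneg fun i _ => Finset.sum_nonneg fun k _ => hFnn i k
    · set r := (quteRej G n c α (P ω)).card with hrdef
      have hmax : max r 1 = r := max_eq_left hpos
      have hrN : r ∈ Finset.Icc 1 N := by
        rw [Finset.mem_Icc]
        exact ⟨hpos, le_trans (Finset.card_le_univ _) (le_of_eq Finset.card_univ)⟩
      rw [hmax]
      have hstep1 : ∀ i ∈ H0, (if i ∈ quteRej G n c α (P ω) then (r:ℝ)⁻¹ else 0)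
          ≤ ∑ k ∈ Finset.Icc 1 N, Set.indicator (E i k) (fun _ => (k:ℝ)⁻¹) ω := by
        intro i _
        split
        · next hmem =>
          have hωE : ω ∈ E i r := by
            constructor
            · exact (mem_quteRej_le G n c hα0 hα1 hmem).1
            · rfl
          calc (r:ℝ)⁻¹ = Set.indicator (E i r) (fun _ => (r:ℝ)⁻¹) ω := by
                rw [Set.indicator_of_mem hωE]
            _ ≤ ∑ k ∈ Finset.Icc 1 N, Set.indicator (E i k) (fun _ => (k:ℝ)⁻¹) ω :=
                Finset.single_le_sum (fun k _ => hFnn i k) hrN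
        · exact Finset.sum_nonneg fun k _ => hFnn i k
      calc ((quteRej G n c α (P ω) ∩ H0).card : ℝ) / r
          = ((H0 ∩ quteRej G n c α (P ω)).card : ℝ) * (r:ℝ)⁻¹ := by
            rw [Finset.inter_comm, div_eq_mul_inv]
        _ = ∑ i ∈ H0, (if i ∈ quteRej G n c α (P ω) then (r:ℝ)⁻¹ else 0) := by
            rw [Finset.sum_ite_mem, Finset.sum_const, nsmul_eq_mul]
        _ ≤ F ω := Finset.sum_le_sum hstep1
  have hnn : ∀ ω, 0 ≤ (((quteRej G n c α (P ω) ∩ H0).card : ℝ) /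
      (max ((quteRej G n c α (P ω)).card) 1 : ℕ)) := fun ω =>
    div_nonneg (Nat.cast_nonneg _) (Nat.cast_nonneg _)
  -- integral computation
  have hint : ∫ ω, F ω ∂μ = ∑ i ∈ H0, ∑ k ∈ Finset.Icc 1 N,
      (μ (E i k)).toReal * (k:ℝ)⁻¹ := by
    rw [integral_finset_sum _ fun i _ => integrable_finset_sum _ fun k _ =>
      (integrable_const _).indicator (hEmeas i k)]
    refine Finset.sum_congr rfl fun i _ => ?_
    rw [integral_finset_sum _ fun k _ => (integrable_const _).indicator (hEmeas i k)]
    refine Finset.sum_congr rfl fun k _ => ?_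
    rw [integral_indicator_const _ (hEmeas i k), smul_eq_mul]
    rfl
  -- per-null bound
  have hper : ∀ i ∈ H0, ∑ k ∈ Finset.Icc 1 N, (μ (E i k)).toReal * (k:ℝ)⁻¹ ≤ α / N := by
    intro i hi
    have hcore := qute_core μ P hPmeas hPrange R hRmeas hRanti i (hnull i hi)
      (hPRDS i hi) hα0 hα1
    have hfin : ∀ k ∈ Finset.Icc 1 N, ((k:ℝ≥0∞))⁻¹ * μ (E i k) ≠ ∞ := fun k _ =>
      ENNReal.mul_ne_top (ENNReal.inv_ne_top.mpr (by
        intro h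
        simp only [Finset.mem_Icc] at *
        exact absurd h (by exact_mod_cast (by omega : ¬ (k:ℕ) = 0)))) (measure_ne_top μ _)
    have heq : ∑ k ∈ Finset.Icc 1 N, (μ (E i k)).toReal * (k:ℝ)⁻¹
        = (∑ k ∈ Finset.Icc 1 N, ((k:ℝ≥0∞))⁻¹ * μ (E i k)).toReal := by
      rw [ENNReal.toReal_sum hfin]
      refine Finset.sum_congr rfl fun k _ => ?_
      rw [ENNReal.toReal_mul, ENNReal.toReal_inv, ENNReal.toReal_natCast, mul_comm]
    rw [heq]
    calc (∑ k ∈ Finset.Icc 1 N, ((k:ℝ≥0∞))⁻¹ * μ (E i k)).toReal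
        ≤ (ENNReal.ofReal (α / N)).toReal := ENNReal.toReal_mono ENNReal.ofReal_ne_top hcore
      _ = α / N := ENNReal.toReal_ofReal (by positivity)
  calc ∫ ω, (((quteRej G n c α (P ω) ∩ H0).card : ℝ) /
        (max ((quteRej G n c α (P ω)).card) 1 : ℕ)) ∂μ
      ≤ ∫ ω, F ω ∂μ :=
        integral_mono_of_nonneg (Filter.Eventually.of_forall hnn) hFint
          (Filter.Eventually.of_forall hpoint)
    _ = ∑ i ∈ H0, ∑ k ∈ Finset.Icc 1 N, (μ (E i k)).toReal * (k:ℝ)⁻¹ := hint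
    _ ≤ ∑ i ∈ H0, α / N := Finset.sum_le_sum hper
    _ = α * H0.card / N := by
        rw [Finset.sum_const, nsmul_eq_mul]
        ring
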